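/- Let τ > 1, v > 0, μ > 0, ω > v²/(τ²−1)². Let (T̃₋, T̃₊) and (T̂₋, T̂₊) be the two admissible solution pairs of the matching system, given by the explicit formulas with − and + signs respectively. Then T̃₋ < T̃₊ < T̂₊ < T̂₋, ∫_{T̃₋}^{T̃₊} (1−t²)^{1/μ} dt > 0, and ∫_{T̂₋}^{T̂₊} (1−t²)^{1/μ} dt < 0; consequently S̃(u_{T̃}) < S̃(u_{T̂}), i.e., the state u_{T̃} has strictly smaller action on the Nehari manifold. -/

import Mathlib

open Set Real MeasureTheory intervalIntegral

noncomputable section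

def Aq (τ v μ ω : ℝ) : ℝ :=
  v ^ 2 / ω * τ ^ (2 * μ) + (τ ^ (2 * μ + 4) - 1) * (τ ^ (2 * μ) - 1)

def Ttm (τ v μ ω : ℝ) : ℝ :=
  1 / (τ ^ (2 * μ + 4) - 1) * (v / Real.sqrt ω - τ ^ 2 * Real.sqrt (Aq τ v μ ω))

def Ttp (τ v μ ω : ℝ) : ℝ :=
  1 / (τ ^ (2 * μ + 4) - 1) * (τ ^ (2 * μ + 2) * (v / Real.sqrt ω) - Real.sqrt (Aq τ v μ ω))

def Thm (τ v μ ω : ℝ) : ℝ :=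
  1 / (τ ^ (2 * μ + 4) - 1) * (v / Real.sqrt ω + τ ^ 2 * Real.sqrt (Aq τ v μ ω))

def Thp (τ v μ ω : ℝ) : ℝ :=
  1 / (τ ^ (2 * μ + 4) - 1) * (τ ^ (2 * μ + 2) * (v / Real.sqrt ω) + Real.sqrt (Aq τ v μ ω))

/-- The one-dimensional NLS soliton. -/
def soliton (μ ω : ℝ) (x : ℝ) : ℝ :=
  (ω * (μ + 1)) ^ (1 / (2 * μ)) * (Real.cosh (μ * Real.sqrt ω * x)) ^ (-(1 / μ))

/-- The reduced action `S̃(u) = (μ/(2(μ+1)))‖u‖_{2μ+2}^{2μ+2}`. -/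
def StilF (μ : ℝ) (f : ℝ → ℝ) : ℝ := μ / (2 * (μ + 1)) * ∫ x : ℝ, |f x| ^ (2 * μ + 2)

/- ### Auxiliary lemmas on `tanh` -/

lemma aux_tanh_mem_Ioo (x : ℝ) : Real.tanh x ∈ Set.Ioo (-1:ℝ) 1 := by
  have hc := Real.cosh_pos x
  have h1 : Real.sinh x < Real.cosh x := by
    rw [Real.sinh_eq, Real.cosh_eq]; nlinarith [Real.exp_pos (-x)]
  have h2 : -Real.cosh x < Real.sinh x := by
    rw [Real.sinh_eq, Real.cosh_eq]; nlinarith [Real.exp_pos x]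
  rw [Real.tanh_eq_sinh_div_cosh]
  constructor
  · rw [lt_div_iff₀ hc]; nlinarith
  · rw [div_lt_one hc]; exact h1

lemma aux_one_sub_tanh_sq (x : ℝ) : 1 - Real.tanh x ^ 2 = Real.cosh x ^ (-2 : ℝ) := by
  have hc := Real.cosh_pos x
  rw [Real.tanh_eq_sinh_div_cosh, show (-2:ℝ) = -(2:ℕ) by norm_num,
    Real.rpow_neg hc.le, Real.rpow_natCast]
  rw [div_pow]
  field_simp
  linarith [Real.cosh_sq x]

lemma aux_hasDerivAt_tanh (x : ℝ) : HasDerivAt Real.tanh (1 - Real.tanh x ^ 2) x := by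
  have hc := Real.cosh_pos x
  have h : HasDerivAt (Real.sinh / Real.cosh)
      ((Real.cosh x * Real.cosh x - Real.sinh x * Real.sinh x) / Real.cosh x ^ 2) x :=
    (Real.hasDerivAt_sinh x).div (Real.hasDerivAt_cosh x) hc.ne'
  convert h using 1
  · funext y; rw [Real.tanh_eq_sinh_div_cosh, Pi.div_apply]
  · rw [Real.tanh_eq_sinh_div_cosh, div_pow]
    field_simp

lemma aux_continuous_tanh : Continuous Real.tanh := by
  have : Real.tanh = fun x => Real.sinh x / Real.cosh x := funext Real.tanh_eq_sinh_div_cosh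
  rw [this]
  exact Real.continuous_sinh.div Real.continuous_cosh fun x => (Real.cosh_pos x).ne'

lemma aux_strictMono_tanh : StrictMono Real.tanh := by
  apply strictMono_of_deriv_pos
  intro x
  rw [(aux_hasDerivAt_tanh x).deriv]
  have h := aux_tanh_mem_Ioo x
  nlinarith [h.1, h.2]

/- ### Change of variables -/

lemma aux_pointwise1 {μ : ℝ} (hμ : 0 < μ) (y : ℝ) :
    (1 - Real.tanh y ^ 2) * (1 - Real.tanh y ^ 2) ^ (1/μ) =
      Real.cosh y ^ (-(2*μ+2)/μ) := by
  have hc := Real.cosh_pos y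
  rw [aux_one_sub_tanh_sq y, ← Real.rpow_mul hc.le, ← Real.rpow_add hc]
  congr 1
  field_simp
  ring

lemma aux_subst {b μ : ℝ} (hb : 0 < b) (hμ : 0 < μ) (a c : ℝ) :
    ∫ x in a..c, Real.cosh (b*x) ^ (-(2*μ+2)/μ) =
      b⁻¹ * ∫ t in Real.tanh (b*a)..Real.tanh (b*c), (1-t^2)^(1/μ) := by
  have hg : Continuous fun t : ℝ => (1-t^2)^(1/μ) :=
    (Real.continuous_rpow_const (by positivity)).comp
      (continuous_const.sub (continuous_pow 2))
  have hder : ∀ x : ℝ, HasDerivAt (fun x => Real.tanh (b*x))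
      (b * (1 - Real.tanh (b*x)^2)) x := by
    intro x
    have h1 : HasDerivAt (fun x : ℝ => b * x) b x := by
      simpa using (hasDerivAt_id x).const_mul b
    exact ((aux_hasDerivAt_tanh (b*x)).comp x h1).congr_deriv (by ring)
  have hcont : Continuous fun x : ℝ => b * (1 - Real.tanh (b*x)^2) :=
    continuous_const.mul (continuous_const.sub
      ((aux_continuous_tanh.comp (continuous_const.mul continuous_id)).pow 2))
  have := intervalIntegral.integral_comp_smul_deriv
    (f := fun x => Real.tanh (b*x)) (f' := fun x => b * (1 - Real.tanh (b*x)^2))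
    (g := fun t => (1-t^2)^(1/μ)) (a := a) (b := c)
    (fun x _ => hder x) hcont.continuousOn hg
  rw [← this, eq_inv_mul_iff_mul_eq₀ hb.ne', ← intervalIntegral.integral_const_mul]
  apply intervalIntegral.integral_congr
  intro x _
  simp only [Function.comp, smul_eq_mul]
  rw [← aux_pointwise1 hμ (b*x)]
  ring

/- ### Integrability -/

lemma aux_integrable_cosh_rpow {b q : ℝ} (hb : 0 < b) (hq : 0 < q) :
    Integrable (fun x : ℝ => Real.cosh (b*x) ^ (-q)) := by
  have hcont : Continuous fun x : ℝ => Real.cosh (b*x) ^ (-q) := by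
    apply Continuous.rpow_const
    · exact Real.continuous_cosh.comp (continuous_const.mul continuous_id)
    · exact fun x => Or.inl (Real.cosh_pos _).ne'
  have hIoi : IntegrableOn (fun x : ℝ => Real.cosh (b*x) ^ (-q)) (Ioi 0) := by
    apply Integrable.mono' (g := fun x => 2^q * Real.exp (-(q*b)*x))
    · exact (exp_neg_integrableOn_Ioi 0 (mul_pos hq hb)).const_mul _
    · exact hcont.aestronglyMeasurable.restrict
    · filter_upwards [ae_restrict_mem measurableSet_Ioi] with x _
      have hc := Real.cosh_pos (b*x)
      rw [Real.norm_eq_abs, abs_of_nonneg (Real.rpow_nonneg hc.le _)]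
      have h1 : Real.exp (b*x) / 2 ≤ Real.cosh (b*x) := by
        rw [Real.cosh_eq]
        have := Real.exp_pos (-(b*x))
        linarith
      have h2 : Real.cosh (b*x) ^ (-q) ≤ (Real.exp (b*x)/2) ^ (-q) :=
        Real.rpow_le_rpow_of_nonpos (by positivity) h1 (by linarith)
      refine h2.trans_eq ?_
      rw [Real.div_rpow (Real.exp_pos _).le (by norm_num), ← Real.exp_mul,
        Real.rpow_neg (by norm_num)]
      rw [div_eq_mul_inv, inv_inv, show b * x * -q = -(q*b)*x by ring]
      ring
  rw [← integrableOn_univ, ← Set.Iio_union_Ici (a := (0:ℝ)), integrableOn_union,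
    integrableOn_Ici_iff_integrableOn_Ioi]
  refine ⟨?_, hIoi⟩
  rw [← (Measure.measurePreserving_neg (volume : Measure ℝ)).integrableOn_comp_preimage
      (Homeomorph.neg ℝ).measurableEmbedding]
  simp only [Function.comp_def, neg_preimage, neg_Iio, neg_zero, mul_neg, ← neg_mul,
    Real.cosh_neg]
  simpa using hIoi

/- ### Shifting and splitting set integrals -/

lemma aux_shift_Iio (G : ℝ → ℝ) (c : ℝ) :
    ∫ x in Iio (0:ℝ), G (x + c) = ∫ x in Iio c, G x := by
  rw [← MeasureTheory.integral_indicator measurableSet_Iio,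
    ← MeasureTheory.integral_indicator measurableSet_Iio]
  rw [← integral_add_right_eq_self (fun x => Set.indicator (Iio c) G x) c]
  congr 1
  funext x
  by_cases h : x < 0
  · rw [Set.indicator_of_mem (by exact h : x ∈ Iio (0:ℝ)),
      Set.indicator_of_mem (by simpa using h : x + c ∈ Iio c)]
  · rw [Set.indicator_of_notMem (by exact h : ¬ x ∈ Iio (0:ℝ)),
      Set.indicator_of_notMem (by simpa using h : ¬ x + c ∈ Iio c)]

lemma aux_shift_Ici (G : ℝ → ℝ) (c : ℝ) :
    ∫ x in Ici (0:ℝ), G (x + c) = ∫ x in Ici c, G x := by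
  rw [← MeasureTheory.integral_indicator measurableSet_Ici,
    ← MeasureTheory.integral_indicator measurableSet_Ici]
  rw [← integral_add_right_eq_self (fun x => Set.indicator (Ici c) G x) c]
  congr 1
  funext x
  by_cases h : (0:ℝ) ≤ x
  · rw [Set.indicator_of_mem (by exact h : x ∈ Ici (0:ℝ)),
      Set.indicator_of_mem (by simpa using h : x + c ∈ Ici c)]
  · rw [Set.indicator_of_notMem (by exact h : ¬ x ∈ Ici (0:ℝ)),
      Set.indicator_of_notMem (by simpa using h : ¬ x + c ∈ Ici c)]

set_option maxHeartbeats 2000000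

lemma aux_split_Iio {G : ℝ → ℝ} (hG : Integrable G) {c1 c2 : ℝ} (h : c1 ≤ c2) :
    ∫ x in Iio c2, G x = (∫ x in Iio c1, G x) + ∫ x in c1..c2, G x := by
  rw [← Iio_union_Ico_eq_Iio h,
    setIntegral_union (by rw [Set.disjoint_left]; intro x hx hx2; exact absurd hx2.1 (not_le.mpr hx))
      measurableSet_Ico hG.integrableOn hG.integrableOn]
  congr 1
  rw [intervalIntegral.integral_of_le h]
  exact setIntegral_congr_set Ico_ae_eq_Ioc

lemma aux_split_Ici {G : ℝ → ℝ} (hG : Integrable G) {c1 c2 : ℝ} (h : c1 ≤ c2) :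
    ∫ x in Ici c1, G x = (∫ x in c1..c2, G x) + ∫ x in Ici c2, G x := by
  rw [← Ico_union_Ici_eq_Ici h,
    setIntegral_union (by rw [Set.disjoint_left]; intro x hx hx2; exact absurd hx2 (not_le.mpr hx.2))
      measurableSet_Ici hG.integrableOn hG.integrableOn]
  congr 1
  rw [intervalIntegral.integral_of_le h]
  exact setIntegral_congr_set Ico_ae_eq_Ioc

/-- ordering of the two admissible solution pairs for `τ > 1`,
signs of the corresponding integrals, and the resulting strict comparison of the
reduced actions of the two stationary states. -/
theorem ground_state_identification
    (τ v μ ω : ℝ) (hτ : 1 < τ) (hv : 0 < v) (hμ : 0 < μ)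
    (hω : ω > v ^ 2 / (τ ^ 2 - 1) ^ 2)
    (xtm xtp xhm xhp : ℝ)
    (hxtm : Real.tanh (μ * Real.sqrt ω * xtm) = Ttm τ v μ ω)
    (hxtp : Real.tanh (μ * Real.sqrt ω * xtp) = Ttp τ v μ ω)
    (hxhm : Real.tanh (μ * Real.sqrt ω * xhm) = Thm τ v μ ω)
    (hxhp : Real.tanh (μ * Real.sqrt ω * xhp) = Thp τ v μ ω)
    (uTil uHat : ℝ → ℝ)
    (huTil : ∀ x : ℝ, uTil x = if x < 0 then soliton μ ω (x + xtm) else soliton μ ω (x + xtp))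
    (huHat : ∀ x : ℝ, uHat x = if x < 0 then soliton μ ω (x + xhm) else soliton μ ω (x + xhp)) :
    (Ttm τ v μ ω < Ttp τ v μ ω ∧ Ttp τ v μ ω < Thp τ v μ ω ∧ Thp τ v μ ω < Thm τ v μ ω) ∧
    (0 < ∫ t in (Ttm τ v μ ω)..(Ttp τ v μ ω), (1 - t ^ 2) ^ (1 / μ)) ∧
    ((∫ t in (Thm τ v μ ω)..(Thp τ v μ ω), (1 - t ^ 2) ^ (1 / μ)) < 0) ∧
    StilF μ uTil < StilF μ uHat := by
  -- basic positivity
  have hτ0 : 0 < τ := lt_trans one_pos hτ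
  have hτ2 : 1 < τ ^ 2 := by nlinarith
  have hτ21 : 0 < τ ^ 2 - 1 := by linarith
  have hω0 : 0 < ω := lt_trans (div_pos (by positivity) (by positivity)) hω
  have hsqω : 0 < Real.sqrt ω := Real.sqrt_pos.mpr hω0
  have hb : 0 < μ * Real.sqrt ω := mul_pos hμ hsqω
  have ha : 1 < τ ^ (2*μ) :=
    (Real.one_lt_rpow_iff_of_pos hτ0).mpr (Or.inl ⟨hτ, by positivity⟩)
  have hE2 : τ ^ (2*μ+2) = τ^(2*μ) * τ^2 := by
    rw [show (2*μ+2:ℝ) = 2*μ + ((2:ℕ):ℝ) by push_cast; ring, Real.rpow_add hτ0,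
      Real.rpow_natCast]
  have hE4 : τ ^ (2*μ+4) = τ^(2*μ) * (τ^2)^2 := by
    rw [show (2*μ+4:ℝ) = 2*μ + ((4:ℕ):ℝ) by push_cast; ring, Real.rpow_add hτ0,
      Real.rpow_natCast]
    ring
  have hD : 0 < τ ^ (2*μ+4) - 1 := by rw [hE4]; nlinarith
  have hb2 : 1 < τ ^ (2*μ+2) := by rw [hE2]; nlinarith
  have hA : 0 < Aq τ v μ ω := by
    unfold Aq
    have h1 : 0 < v^2/ω := by positivity
    have h2 : 0 < τ ^ (2*μ) := by positivity
    nlinarith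
  have hc : 0 < v / Real.sqrt ω := div_pos hv hsqω
  have hs : 0 < Real.sqrt (Aq τ v μ ω) := Real.sqrt_pos.mpr hA
  have hssq : Real.sqrt (Aq τ v μ ω) ^ 2 = Aq τ v μ ω := Real.sq_sqrt hA.le
  have hcsq : (v / Real.sqrt ω) ^ 2 = v^2/ω := by rw [div_pow, Real.sq_sqrt hω0.le]
  have hw : v^2/ω < (τ^2-1)^2 := by
    rw [div_lt_iff₀ hω0]
    have := (div_lt_iff₀ (by positivity : (0:ℝ) < (τ^2-1)^2)).mp hω
    nlinarith
  -- the key inequality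
  have hkey : (τ^(2*μ+2)-1) * (v/Real.sqrt ω) < (τ^2-1) * Real.sqrt (Aq τ v μ ω) := by
    by_contra hcon
    push_neg at hcon
    have h1 : ((τ^2-1) * Real.sqrt (Aq τ v μ ω))^2 ≤ ((τ^(2*μ+2)-1)*(v/Real.sqrt ω))^2 :=
      pow_le_pow_left₀ (by positivity) hcon 2
    rw [mul_pow, mul_pow, hssq, hcsq] at h1
    have hid : (τ^2-1)^2 * Aq τ v μ ω - (τ^(2*μ+2)-1)^2 * (v^2/ω) =
        (τ^(2*μ+4)-1)*(τ^(2*μ)-1)*((τ^2-1)^2 - v^2/ω) := by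
      unfold Aq; rw [hE2, hE4]; ring
    linarith [mul_pos (mul_pos hD (by linarith : (0:ℝ) < τ^(2*μ)-1))
      (by linarith : (0:ℝ) < (τ^2-1)^2 - v^2/ω)]
  have oD : 0 < 1/(τ^(2*μ+4)-1) := by positivity
  -- the orderings
  have o1 : Ttm τ v μ ω < Ttp τ v μ ω := by
    unfold Ttm Ttp
    apply mul_lt_mul_of_pos_left _ oD
    nlinarith [mul_pos (by linarith : (0:ℝ) < τ^(2*μ+2)-1) hc,
      mul_pos hτ21 hs]
  have o2 : Ttp τ v μ ω < Thp τ v μ ω := by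
    unfold Ttp Thp
    apply mul_lt_mul_of_pos_left _ oD
    linarith
  have o3 : Thp τ v μ ω < Thm τ v μ ω := by
    unfold Thp Thm
    apply mul_lt_mul_of_pos_left _ oD
    nlinarith [hkey]
  -- memberships
  have hm1 : Ttm τ v μ ω ∈ Set.Ioo (-1:ℝ) 1 := hxtm ▸ aux_tanh_mem_Ioo _
  have hm2 : Ttp τ v μ ω ∈ Set.Ioo (-1:ℝ) 1 := hxtp ▸ aux_tanh_mem_Ioo _
  have hm3 : Thm τ v μ ω ∈ Set.Ioo (-1:ℝ) 1 := hxhm ▸ aux_tanh_mem_Ioo _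
  have hm4 : Thp τ v μ ω ∈ Set.Ioo (-1:ℝ) 1 := hxhp ▸ aux_tanh_mem_Ioo _
  -- integrand
  have hgcont : Continuous fun t : ℝ => (1-t^2)^(1/μ) :=
    (Real.continuous_rpow_const (by positivity)).comp
      (continuous_const.sub (continuous_pow 2))
  have hpos : ∀ {a b : ℝ}, a ∈ Set.Ioo (-1:ℝ) 1 → b ∈ Set.Ioo (-1:ℝ) 1 → a < b →
      0 < ∫ t in a..b, (1-t^2)^(1/μ) := by
    intro a b hma hmb hab
    apply intervalIntegral_pos_of_pos_on (hgcont.intervalIntegrable _ _) _ hab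
    intro x hx
    have h1 : -1 < x := lt_trans hma.1 hx.1
    have h2 : x < 1 := lt_trans hx.2 hmb.2
    have : 0 < 1 - x^2 := by nlinarith
    exact Real.rpow_pos_of_pos this _
  have I1 : 0 < ∫ t in (Ttm τ v μ ω)..(Ttp τ v μ ω), (1-t^2)^(1/μ) := hpos hm1 hm2 o1
  have I2' : 0 < ∫ t in (Thp τ v μ ω)..(Thm τ v μ ω), (1-t^2)^(1/μ) := hpos hm4 hm3 o3
  have I2 : (∫ t in (Thm τ v μ ω)..(Thp τ v μ ω), (1-t^2)^(1/μ)) < 0 := by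
    rw [intervalIntegral.integral_symm]; linarith
  refine ⟨⟨o1, o2, o3⟩, I1, I2, ?_⟩
  -- the action comparison
  set b := μ * Real.sqrt ω with hbdef
  set K := (ω*(μ+1))^((μ+1)/μ) with hKdef
  have hK : 0 < K := Real.rpow_pos_of_pos (by positivity) _
  set G : ℝ → ℝ := fun x => K * Real.cosh (b*x) ^ (-(2*μ+2)/μ) with hGdef
  have hGeq : ∀ x, |soliton μ ω x| ^ (2*μ+2) = G x := by
    intro x
    have h0 : 0 < soliton μ ω x :=
      mul_pos (Real.rpow_pos_of_pos (by positivity) _)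
        (Real.rpow_pos_of_pos (Real.cosh_pos _) _)
    rw [abs_of_pos h0]
    unfold soliton
    rw [Real.mul_rpow (by positivity) (by positivity),
      ← Real.rpow_mul (by positivity : (0:ℝ) ≤ ω*(μ+1)),
      ← Real.rpow_mul (Real.cosh_pos _).le]
    rw [hGdef, hKdef]
    congr 1
    · congr 1
      field_simp
    · congr 1
      field_simp
  have hGint : Integrable G := by
    have h := (aux_integrable_cosh_rpow hb (q := (2*μ+2)/μ) (by positivity)).const_mul K
    have hGdef2 : G = fun x => K * Real.cosh (b*x) ^ (-((2*μ+2)/μ)) := by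
      rw [hGdef]; funext x; rw [neg_div]
    rw [hGdef2]; exact h
  have hshift : ∀ c : ℝ, Integrable fun x => G (x + c) := by
    intro c
    have h := (MeasureTheory.measurePreserving_add_right (volume : Measure ℝ) c).integrable_comp
      hGint.aestronglyMeasurable
    exact h.mpr hGint
  have hdecomp : ∀ (u : ℝ → ℝ) (c1 c2 : ℝ),
      (∀ x : ℝ, u x = if x < 0 then soliton μ ω (x + c1) else soliton μ ω (x + c2)) →
      ∫ x : ℝ, |u x| ^ (2*μ+2) = (∫ x in Iio c1, G x) + ∫ x in Ici c2, G x := by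
    intro u c1 c2 hu
    have hfun : (fun x => |u x| ^ (2*μ+2)) = fun x =>
        (Iio (0:ℝ)).indicator (fun y => G (y + c1)) x +
        (Ici (0:ℝ)).indicator (fun y => G (y + c2)) x := by
      funext x
      by_cases hx : x < 0
      · rw [hu x, if_pos hx, Set.indicator_of_mem (by exact hx : x ∈ Iio (0:ℝ)),
          Set.indicator_of_notMem (by simpa using hx), hGeq, add_zero]
      · rw [hu x, if_neg hx, Set.indicator_of_notMem (by exact hx : ¬ x ∈ Iio (0:ℝ)),
          Set.indicator_of_mem (by simpa using hx : x ∈ Ici (0:ℝ)), hGeq, zero_add]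
    rw [hfun, integral_add ((hshift c1).indicator measurableSet_Iio)
        ((hshift c2).indicator measurableSet_Ici),
      MeasureTheory.integral_indicator measurableSet_Iio,
      MeasureTheory.integral_indicator measurableSet_Ici,
      aux_shift_Iio, aux_shift_Ici]
  have hTileq := hdecomp uTil xtm xtp huTil
  have hHateq := hdecomp uHat xhm xhp huHat
  -- ordering of shifts
  have hxo1 : xtm < xhm := by
    have h := aux_strictMono_tanh.lt_iff_lt.mp
      (show Real.tanh (b*xtm) < Real.tanh (b*xhm) by rw [hxtm, hxhm]; linarith)
    exact lt_of_mul_lt_mul_left h hb.le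
  have hxo2 : xtp < xhp := by
    have h := aux_strictMono_tanh.lt_iff_lt.mp
      (show Real.tanh (b*xtp) < Real.tanh (b*xhp) by rw [hxtp, hxhp]; linarith)
    exact lt_of_mul_lt_mul_left h hb.le
  have hsplit1 := aux_split_Iio hGint hxo1.le
  have hsplit2 := aux_split_Ici hGint hxo2.le
  -- interval integrals of G via substitution
  have hIv : ∀ a c : ℝ, ∫ x in a..c, G x =
      K * (b⁻¹ * ∫ t in Real.tanh (b*a)..Real.tanh (b*c), (1-t^2)^(1/μ)) := by
    intro a c
    rw [hGdef]
    rw [intervalIntegral.integral_const_mul, aux_subst hb hμ]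
  have htt : ∫ x in xtm..xhm, G x =
      K * (b⁻¹ * ∫ t in (Ttm τ v μ ω)..(Thm τ v μ ω), (1-t^2)^(1/μ)) := by
    rw [hIv, hxtm, hxhm]
  have htp : ∫ x in xtp..xhp, G x =
      K * (b⁻¹ * ∫ t in (Ttp τ v μ ω)..(Thp τ v μ ω), (1-t^2)^(1/μ)) := by
    rw [hIv, hxtp, hxhp]
  have hadj1 : (∫ t in (Ttm τ v μ ω)..(Ttp τ v μ ω), (1-t^2)^(1/μ)) +
      (∫ t in (Ttp τ v μ ω)..(Thm τ v μ ω), (1-t^2)^(1/μ)) =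
      ∫ t in (Ttm τ v μ ω)..(Thm τ v μ ω), (1-t^2)^(1/μ) :=
    intervalIntegral.integral_add_adjacent_intervals (hgcont.intervalIntegrable _ _)
      (hgcont.intervalIntegrable _ _)
  have hadj2 : (∫ t in (Ttp τ v μ ω)..(Thm τ v μ ω), (1-t^2)^(1/μ)) +
      (∫ t in (Thm τ v μ ω)..(Thp τ v μ ω), (1-t^2)^(1/μ)) =
      ∫ t in (Ttp τ v μ ω)..(Thp τ v μ ω), (1-t^2)^(1/μ) :=
    intervalIntegral.integral_add_adjacent_intervals (hgcont.intervalIntegrable _ _)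
      (hgcont.intervalIntegrable _ _)
  have hlt : ∫ x in xtp..xhp, G x < ∫ x in xtm..xhm, G x := by
    rw [htt, htp]
    have hKb : 0 < K * b⁻¹ := by positivity
    have : (∫ t in (Ttp τ v μ ω)..(Thp τ v μ ω), (1-t^2)^(1/μ)) <
        ∫ t in (Ttm τ v μ ω)..(Thm τ v μ ω), (1-t^2)^(1/μ) := by linarith
    calc K * (b⁻¹ * ∫ t in (Ttp τ v μ ω)..(Thp τ v μ ω), (1-t^2)^(1/μ))
        = K * b⁻¹ * ∫ t in (Ttp τ v μ ω)..(Thp τ v μ ω), (1-t^2)^(1/μ) := by ring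
      _ < K * b⁻¹ * ∫ t in (Ttm τ v μ ω)..(Thm τ v μ ω), (1-t^2)^(1/μ) :=
          mul_lt_mul_of_pos_left this hKb
      _ = K * (b⁻¹ * ∫ t in (Ttm τ v μ ω)..(Thm τ v μ ω), (1-t^2)^(1/μ)) := by ring
  unfold StilF
  apply mul_lt_mul_of_pos_left _ (by positivity : 0 < μ/(2*(μ+1)))
  rw [hTileq, hHateq]
  linarith [hsplit1, hsplit2, hlt]
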